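/- arXiv:1709.03374 — 6 statements merged into one kernel-verified Lean document; each statement's English description precedes it below -/
import Mathlib

section
/- The piecewise constant function f defined by f(t) = ((α+β₁)/α)·(μ/Λ) on [−β₂Λ/((β₁+β₂)μ), −(β₁/(α+β₁))·β₂Λ/((β₁+β₂)μ)], f(t) = ((α+β₁)/(α+β₂))·(μ/Λ) on (−(β₁/(α+β₁))·β₂Λ/((β₁+β₂)μ), 0], and f(t) = (α/(α+β₂))·(μ/Λ) on (0, β₁Λ/((β₁+β₂)μ)], with f = 0 elsewhere, integrates to 1 over ℝ. -/
open MeasureTheory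

/-- The three-step equilibrium density of the unconstrained fluid model integrates to 1. -/
theorem equilibrium_density_integrates_to_one
    (α β₁ β₂ μ Λ : ℝ) (hα : 0 < α) (hβ₁ : 0 < β₁) (hβ₂ : 0 < β₂) (hμ : 0 < μ) (hΛ : 0 < Λ)
    (f : ℝ → ℝ)
    (hf : ∀ t : ℝ, f t =
      if -(β₂ * Λ / ((β₁ + β₂) * μ)) ≤ t ∧ t ≤ -(β₁ / (α + β₁)) * (β₂ * Λ / ((β₁ + β₂) * μ)) then
        ((α + β₁) / α) * (μ / Λ)
      else if -(β₁ / (α + β₁)) * (β₂ * Λ / ((β₁ + β₂) * μ)) < t ∧ t ≤ 0 then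
        ((α + β₁) / (α + β₂)) * (μ / Λ)
      else if 0 < t ∧ t ≤ β₁ * Λ / ((β₁ + β₂) * μ) then
        (α / (α + β₂)) * (μ / Λ)
      else 0) :
    ∫ t : ℝ, f t = 1 := by
  set a : ℝ := -(β₂ * Λ / ((β₁ + β₂) * μ)) with ha
  set b : ℝ := -(β₁ / (α + β₁)) * (β₂ * Λ / ((β₁ + β₂) * μ)) with hb
  set d : ℝ := β₁ * Λ / ((β₁ + β₂) * μ) with hd
  set c₁ : ℝ := ((α + β₁) / α) * (μ / Λ) with hc₁
  set c₂ : ℝ := ((α + β₁) / (α + β₂)) * (μ / Λ) with hc₂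
  set c₃ : ℝ := (α / (α + β₂)) * (μ / Λ) with hc₃
  have hαβ₁ : 0 < α + β₁ := by linarith
  have hαβ₂ : 0 < α + β₂ := by linarith
  have hββ : 0 < β₁ + β₂ := by linarith
  have hApos : 0 < β₂ * Λ / ((β₁ + β₂) * μ) := by positivity
  have hab : a ≤ b := by
    rw [ha, hb]
    rw [neg_mul, neg_le_neg_iff]
    have h1 : β₁ / (α + β₁) ≤ 1 := by
      rw [div_le_one hαβ₁]; linarith
    nlinarith
  have hb0 : b ≤ 0 := by
    rw [hb, neg_mul, neg_nonpos]
    positivity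
  have hd0 : 0 ≤ d := by rw [hd]; positivity
  have hfe : f = fun t => (Set.Icc a b).indicator (fun _ => c₁) t
      + (Set.Ioc b 0).indicator (fun _ => c₂) t
      + (Set.Ioc 0 d).indicator (fun _ => c₃) t := by
    funext t
    rw [hf t]
    simp only [Set.indicator_apply, Set.mem_Icc, Set.mem_Ioc]
    by_cases h1 : a ≤ t ∧ t ≤ b
    · have hn2 : ¬(b < t ∧ t ≤ 0) := fun h => absurd h1.2 (not_le.2 h.1)
      have hn3 : ¬(0 < t ∧ t ≤ d) := fun h => absurd (h1.2.trans hb0) (not_le.2 h.1)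
      simp only [if_pos h1, if_neg hn2, if_neg hn3]; ring
    · simp only [if_neg h1]
      by_cases h2 : b < t ∧ t ≤ 0
      · have hn3 : ¬(0 < t ∧ t ≤ d) := fun h => absurd h2.2 (not_le.2 h.1)
        simp only [if_pos h2, if_neg hn3]; ring
      · simp only [if_neg h2]
        by_cases h3 : 0 < t ∧ t ≤ d
        · simp only [if_pos h3]; ring
        · simp only [if_neg h3]; ring
  have hs1 : MeasurableSet (Set.Icc a b) := measurableSet_Icc
  have hs2 : MeasurableSet (Set.Ioc b (0:ℝ)) := measurableSet_Ioc
  have hs3 : MeasurableSet (Set.Ioc (0:ℝ) d) := measurableSet_Ioc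
  have hi1 : Integrable ((Set.Icc a b).indicator (fun _ => c₁)) := by
    refine (integrableOn_const ?_).integrable_indicator hs1
    simp [Real.volume_Icc]
  have hi2 : Integrable ((Set.Ioc b (0:ℝ)).indicator (fun _ => c₂)) := by
    refine (integrableOn_const ?_).integrable_indicator hs2
    simp [Real.volume_Ioc]
  have hi3 : Integrable ((Set.Ioc (0:ℝ) d).indicator (fun _ => c₃)) := by
    refine (integrableOn_const ?_).integrable_indicator hs3
    simp [Real.volume_Ioc]
  simp only [hfe]
  have hi12 : Integrable (fun t : ℝ => (Set.Icc a b).indicator (fun _ => c₁) t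
      + (Set.Ioc b 0).indicator (fun _ => c₂) t) := hi1.add hi2
  rw [integral_add hi12 hi3, integral_add hi1 hi2,
    integral_indicator_const c₁ hs1, integral_indicator_const c₂ hs2,
    integral_indicator_const c₃ hs3,
    measureReal_def, measureReal_def, measureReal_def,
    Real.volume_Icc, Real.volume_Ioc, Real.volume_Ioc,
    ENNReal.toReal_ofReal (by linarith : (0:ℝ) ≤ b - a),
    ENNReal.toReal_ofReal (by linarith : (0:ℝ) ≤ 0 - b),
    ENNReal.toReal_ofReal (by linarith : (0:ℝ) ≤ d - 0)]
  rw [ha, hb, hd, hc₁, hc₂, hc₃]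
  have hα' : α ≠ 0 := ne_of_gt hα
  have hΛ' : Λ ≠ 0 := ne_of_gt hΛ
  have hμ' : μ ≠ 0 := ne_of_gt hμ
  have h1' : (α + β₁) ≠ 0 := ne_of_gt hαβ₁
  have h2' : (α + β₂) ≠ 0 := ne_of_gt hαβ₂
  have h3' : (β₁ + β₂) ≠ 0 := ne_of_gt hββ
  simp only [smul_eq_mul]
  field_simp
  ring
end

section
/- Let α, β₁, β₂, μ, Λ > 0 and let F be the cumulative arrival distribution of the unconstrained fluid equilibrium, i.e., F(t) = ∫_{−∞}^t f(s) ds with f the three-step equilibrium density. Then the cost function C(t) of a drop arriving at t is constant and equal to β₁·β₂Λ/((β₁+β₂)μ) for all t in the support [−β₂Λ/((β₁+β₂)μ), β₁Λ/((β₁+β₂)μ)], where C(t) = α(ΛF(t) − μ(t+T_{e1}))/μ − β₁t on the first segment, C(t) = α(ΛF(t) − μ(t+T_{e1}))/μ − β₁t + β₂((ΛF(t) − μ(t+T_{e1}))/μ + t) on the second, and C(t) = β₂t + (β₂+α)(ΛF(t) − μ(t+T_{e1}))/μ on the third, with T_{e1} = β₂Λ/((β₁+β₂)μ). -/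
open MeasureTheory

lemma Icc_inter_Iic' (a b c : ℝ) : Set.Icc a b ∩ Set.Iic c = Set.Icc a (min b c) := by
  rw [← Set.Ici_inter_Iic, Set.inter_assoc, Set.Iic_inter_Iic, Set.Ici_inter_Iic]

lemma F_formula (a b d c₁ c₂ c₃ : ℝ) (hab : a ≤ b) (hb0 : b ≤ 0) (hd : 0 ≤ d)
    (f : ℝ → ℝ)
    (hf : ∀ s : ℝ, f s =
      if a ≤ s ∧ s ≤ b then c₁
      else if b < s ∧ s ≤ 0 then c₂
      else if 0 < s ∧ s ≤ d then c₃
      else 0)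
    (t : ℝ) :
    ∫ s in Set.Iic t, f s
      = c₁ * max (min b t - a) 0 + c₂ * max (min 0 t - b) 0 + c₃ * max (min d t) 0 := by
  have hfg : ∀ s : ℝ, f s =
      (Set.Icc a b).indicator (fun _ => c₁) s + (Set.Ioc b 0).indicator (fun _ => c₂) s
        + (Set.Ioc 0 d).indicator (fun _ => c₃) s := by
    intro s
    rw [hf]
    simp only [Set.indicator_apply, Set.mem_Icc, Set.mem_Ioc]
    split_ifs <;> first | ring1 | (casesm* _ ∧ _; linarith)
  have i1 : IntegrableOn ((Set.Icc a b).indicator fun _ => c₁) (Set.Iic t) := by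
    rw [IntegrableOn, integrable_indicator_iff measurableSet_Icc]
    refine integrableOn_const (ne_of_lt ?_)
    exact lt_of_le_of_lt (Measure.restrict_apply_le _ _) measure_Icc_lt_top
  have i2 : IntegrableOn ((Set.Ioc b 0).indicator fun _ => c₂) (Set.Iic t) := by
    rw [IntegrableOn, integrable_indicator_iff measurableSet_Ioc]
    refine integrableOn_const (ne_of_lt ?_)
    exact lt_of_le_of_lt (Measure.restrict_apply_le _ _) measure_Ioc_lt_top
  have i3 : IntegrableOn ((Set.Ioc 0 d).indicator fun _ => c₃) (Set.Iic t) := by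
    rw [IntegrableOn, integrable_indicator_iff measurableSet_Ioc]
    refine integrableOn_const (ne_of_lt ?_)
    exact lt_of_le_of_lt (Measure.restrict_apply_le _ _) measure_Ioc_lt_top
  simp only [hfg]
  have h12 : Integrable (fun s => ((Set.Icc a b).indicator fun _ => c₁) s
      + ((Set.Ioc b 0).indicator fun _ => c₂) s) (volume.restrict (Set.Iic t)) := i1.add i2
  rw [integral_add h12 i3, integral_add i1 i2,
    setIntegral_indicator measurableSet_Icc, setIntegral_indicator measurableSet_Ioc,
    setIntegral_indicator measurableSet_Ioc,
    Set.inter_comm (Set.Iic t), Set.inter_comm (Set.Iic t), Set.inter_comm (Set.Iic t),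
    Icc_inter_Iic' , Set.Ioc_inter_Iic, Set.Ioc_inter_Iic,
    setIntegral_const, setIntegral_const, setIntegral_const,
    Real.volume_real_Icc, Real.volume_real_Ioc, Real.volume_real_Ioc]
  simp only [smul_eq_mul, sub_zero]
  ring

set_option maxHeartbeats 1000000 in
/-- In the unconstrained fluid equilibrium, the cost of a drop arriving at any time `t` in the
support is constant, equal to `β₁β₂Λ/((β₁+β₂)μ)`, where the cost is given by the appropriate
piecewise formula on each of the three segments. -/
theorem equilibrium_cost_constant_on_support
    (α β₁ β₂ μ Λ : ℝ) (hα : 0 < α) (hβ₁ : 0 < β₁) (hβ₂ : 0 < β₂) (hμ : 0 < μ) (hΛ : 0 < Λ)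
    (f : ℝ → ℝ)
    (hf : ∀ t : ℝ, f t =
      if -(β₂ * Λ / ((β₁ + β₂) * μ)) ≤ t ∧ t ≤ -(β₁ / (α + β₁)) * (β₂ * Λ / ((β₁ + β₂) * μ)) then
        ((α + β₁) / α) * (μ / Λ)
      else if -(β₁ / (α + β₁)) * (β₂ * Λ / ((β₁ + β₂) * μ)) < t ∧ t ≤ 0 then
        ((α + β₁) / (α + β₂)) * (μ / Λ)
      else if 0 < t ∧ t ≤ β₁ * Λ / ((β₁ + β₂) * μ) then
        (α / (α + β₂)) * (μ / Λ)
      else 0)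
    (F : ℝ → ℝ) (hF : ∀ t : ℝ, F t = ∫ s in Set.Iic t, f s) :
    let Te₁ : ℝ := β₂ * Λ / ((β₁ + β₂) * μ)
    (∀ t : ℝ, -Te₁ ≤ t → t ≤ -(β₁ / (α + β₁)) * Te₁ →
      α * (Λ * F t - μ * (t + Te₁)) / μ - β₁ * t = β₁ * (β₂ * Λ / ((β₁ + β₂) * μ))) ∧
    (∀ t : ℝ, -(β₁ / (α + β₁)) * Te₁ ≤ t → t ≤ 0 →
      α * (Λ * F t - μ * (t + Te₁)) / μ - β₁ * t
        + β₂ * ((Λ * F t - μ * (t + Te₁)) / μ + t) = β₁ * (β₂ * Λ / ((β₁ + β₂) * μ))) ∧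
    (∀ t : ℝ, 0 ≤ t → t ≤ β₁ * Λ / ((β₁ + β₂) * μ) →
      β₂ * t + (β₂ + α) * ((Λ * F t - μ * (t + Te₁)) / μ) = β₁ * (β₂ * Λ / ((β₁ + β₂) * μ))) := by
  intro Te₁
  have hTe : Te₁ = β₂ * Λ / ((β₁ + β₂) * μ) := rfl
  have hTe0 : 0 < β₂ * Λ / ((β₁ + β₂) * μ) := by positivity
  set a : ℝ := -(β₂ * Λ / ((β₁ + β₂) * μ)) with ha
  set b : ℝ := -(β₁ / (α + β₁)) * (β₂ * Λ / ((β₁ + β₂) * μ)) with hb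
  set d : ℝ := β₁ * Λ / ((β₁ + β₂) * μ) with hd
  have hr01 : β₁ / (α + β₁) ≤ 1 := by
    rw [div_le_one (by linarith)]; linarith
  have hr0 : 0 < β₁ / (α + β₁) := by positivity
  have hab : a ≤ b := by
    rw [ha, hb]; nlinarith
  have hb0 : b ≤ 0 := by
    rw [hb]; nlinarith
  have hd0 : (0:ℝ) ≤ d := le_of_lt (by rw [hd]; positivity)
  have hFval : ∀ t : ℝ, F t =
      ((α + β₁) / α) * (μ / Λ) * max (min b t - a) 0
        + ((α + β₁) / (α + β₂)) * (μ / Λ) * max (min 0 t - b) 0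
        + (α / (α + β₂)) * (μ / Λ) * max (min d t) 0 := by
    intro t
    rw [hF]
    exact F_formula a b d _ _ _ hab hb0 hd0 f hf t
  have hα' := hα.ne'
  have hμ' := hμ.ne'
  have hΛ' := hΛ.ne'
  have hαβ₁ : α + β₁ ≠ 0 := by positivity
  have hαβ₂ : α + β₂ ≠ 0 := by positivity
  have hβ₁β₂ : β₁ + β₂ ≠ 0 := by positivity
  refine ⟨?_, ?_, ?_⟩
  · intro t ht1 ht2
    simp only [hTe] at ht1 ht2 ⊢
    rw [hFval t, min_eq_right ht2, min_eq_right (le_trans ht2 hb0),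
      min_eq_right (le_trans (le_trans ht2 hb0) hd0),
      max_eq_left (by rw [ha] at ht1 ⊢; linarith : (0:ℝ) ≤ t - a),
      max_eq_right (by linarith : t - b ≤ (0:ℝ)),
      max_eq_right (le_trans ht2 hb0)]
    rw [ha]
    field_simp
    ring
  · intro t ht1 ht2
    simp only [hTe] at ht1 ht2 ⊢
    rw [hFval t, min_eq_left (ht1 : b ≤ t), min_eq_right ht2,
      min_eq_right (le_trans ht2 hd0),
      max_eq_left (by linarith : (0:ℝ) ≤ b - a),
      max_eq_left (by linarith : (0:ℝ) ≤ t - b),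
      max_eq_right ht2]
    rw [ha, hb]
    field_simp
    ring
  · intro t ht1 ht2
    simp only [hTe] at ht1 ht2 ⊢
    rw [hFval t, min_eq_left (le_trans hb0 ht1), min_eq_left ht1,
      min_eq_right (ht2 : t ≤ d),
      max_eq_left (by linarith : (0:ℝ) ≤ b - a),
      max_eq_left (by linarith : (0:ℝ) ≤ 0 - b),
      max_eq_left ht1]
    rw [ha, hb]
    field_simp
    ring
end

section
/- Let α, β₂, λ, μ, T₁ > 0 and p ∈ (0,1]. Define g₂(p) = β₁T₁ + αλp/(2μ) + β₂ Σ_{i=1}^∞ (e^{−λp}(λp)^i/i!) · (1/i) Σ_{k=1}^i E[(Σ_{j=1}^k X_j − T₁)^+], where X_j are i.i.d. Exp(μ). Then g₂(p) is well-defined (the double series converges absolutely) and is continuous and strictly increasing in p. -/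
open MeasureTheory ProbabilityTheory


lemma tsum_pow_div_factorial_eq (x : ℝ) :
    ∑' n : ℕ, x ^ n / (Nat.factorial n : ℝ) = Real.exp x := by
  rw [Real.exp_eq_exp_ℝ, NormedSpace.exp_eq_tsum_div]

lemma g2aux_summable {c : ℕ → ℝ} {M : ℝ} (hc0 : ∀ i, 0 ≤ c i)
    (hcb : ∀ i, c i ≤ M * 2 ^ i) {x : ℝ} (hx : 0 ≤ x) :
    Summable (fun i : ℕ => Real.exp (-x) * x ^ i / (Nat.factorial i : ℝ) * c i) := by
  have hM : 0 ≤ M := le_trans (hc0 0) (by simpa using hcb 0)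
  refine Summable.of_nonneg_of_le (fun i => ?_) (fun i => ?_)
    ((Real.summable_pow_div_factorial (2 * x)).mul_right M)
  · exact mul_nonneg (by positivity) (hc0 i)
  · have hexp : Real.exp (-x) ≤ 1 := by
      have := Real.exp_le_exp.mpr (neg_nonpos.mpr hx)
      simpa using this
    calc Real.exp (-x) * x ^ i / (Nat.factorial i : ℝ) * c i
        ≤ 1 * x ^ i / (Nat.factorial i : ℝ) * (M * 2 ^ i) := by
          gcongr
          · exact hc0 i
          · exact hcb i
      _ = (2 * x) ^ i / (Nat.factorial i : ℝ) * M := by rw [mul_pow]; ring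

lemma g2aux_mono {c : ℕ → ℝ} {M : ℝ} (hc0 : ∀ i, 0 ≤ c i) (hcm : Monotone c)
    (hcb : ∀ i, c i ≤ M * 2 ^ i) {x y : ℝ} (hx : 0 ≤ x) (hxy : x ≤ y) :
    ∑' i : ℕ, Real.exp (-x) * x ^ i / (Nat.factorial i : ℝ) * c i ≤
      ∑' i : ℕ, Real.exp (-y) * y ^ i / (Nat.factorial i : ℝ) * c i := by
  have hy : 0 ≤ y := hx.trans hxy
  set z := y - x with hzdef
  have hz : 0 ≤ z := by simp only [hzdef, sub_nonneg]; exact hxy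
  have hf : Summable (fun i : ℕ => Real.exp (-x) * x ^ i / (Nat.factorial i : ℝ) * c i) :=
    g2aux_summable hc0 hcb hx
  have hfn : Summable (fun i : ℕ => ‖Real.exp (-x) * x ^ i / (Nat.factorial i : ℝ) * c i‖) :=
    hf.congr fun i => (Real.norm_of_nonneg (mul_nonneg (by positivity) (hc0 i))).symm
  have hg : Summable (fun j : ℕ => Real.exp (-z) * z ^ j / (Nat.factorial j : ℝ)) :=
    ((Real.summable_pow_div_factorial z).mul_left (Real.exp (-z))).congr fun j => by ring
  have hgn : Summable (fun j : ℕ => ‖Real.exp (-z) * z ^ j / (Nat.factorial j : ℝ)‖) :=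
    hg.congr fun j => (Real.norm_of_nonneg (by positivity)).symm
  have hg1 : ∑' j : ℕ, Real.exp (-z) * z ^ j / (Nat.factorial j : ℝ) = 1 := by
    rw [tsum_congr (fun j : ℕ =>
      show Real.exp (-z) * z ^ j / (Nat.factorial j : ℝ)
        = Real.exp (-z) * (z ^ j / (Nat.factorial j : ℝ)) by ring),
      tsum_mul_left, tsum_pow_div_factorial_eq, ← Real.exp_add]
    simp
  have hcauchy := tsum_mul_tsum_eq_tsum_sum_range_of_summable_norm hfn hgn
  have hsum2 : Summable (fun n : ℕ => ∑ k ∈ Finset.range (n + 1),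
      (Real.exp (-x) * x ^ k / (Nat.factorial k : ℝ) * c k) *
        (Real.exp (-z) * z ^ (n - k) / (Nat.factorial (n - k) : ℝ))) :=
    (summable_norm_sum_mul_range_of_summable_norm hfn hgn).of_norm
  have hstep : ∀ n : ℕ, ∑ k ∈ Finset.range (n + 1),
      (Real.exp (-x) * x ^ k / (Nat.factorial k : ℝ) * c k) *
        (Real.exp (-z) * z ^ (n - k) / (Nat.factorial (n - k) : ℝ)) ≤
      Real.exp (-y) * y ^ n / (Nat.factorial n : ℝ) * c n := by
    intro n
    have binom : ∑ k ∈ Finset.range (n + 1),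
        (Real.exp (-x) * x ^ k / (Nat.factorial k : ℝ)) *
          (Real.exp (-z) * z ^ (n - k) / (Nat.factorial (n - k) : ℝ)) =
        Real.exp (-y) * y ^ n / (Nat.factorial n : ℝ) := by
      have h1 : ∀ k ∈ Finset.range (n + 1),
          (Real.exp (-x) * x ^ k / (Nat.factorial k : ℝ)) *
            (Real.exp (-z) * z ^ (n - k) / (Nat.factorial (n - k) : ℝ)) =
          Real.exp (-y) * (x ^ k * z ^ (n - k) * (n.choose k : ℝ) / (Nat.factorial n : ℝ)) := by
        intro k hk
        have hkn : k ≤ n := Nat.lt_succ_iff.mp (Finset.mem_range.mp hk)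
        have hfact : ((Nat.factorial n : ℕ) : ℝ)
            = (n.choose k : ℝ) * (Nat.factorial k : ℝ) * (Nat.factorial (n - k) : ℝ) := by
          exact_mod_cast (Nat.choose_mul_factorial_mul_factorial hkn).symm
        have hexp : Real.exp (-x) * Real.exp (-z) = Real.exp (-y) := by
          rw [← Real.exp_add]; congr 1; rw [hzdef]; ring
        have hk0 : (Nat.factorial k : ℝ) ≠ 0 := by positivity
        have hnk0 : (Nat.factorial (n - k) : ℝ) ≠ 0 := by positivity
        have hn0 : (Nat.factorial n : ℝ) ≠ 0 := by positivity
        field_simp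
        rw [hfact, ← hexp]
        ring
      rw [Finset.sum_congr rfl h1, ← Finset.mul_sum]
      have h2 : ∑ k ∈ Finset.range (n + 1),
          x ^ k * z ^ (n - k) * (n.choose k : ℝ) / (Nat.factorial n : ℝ)
          = y ^ n / (Nat.factorial n : ℝ) := by
        rw [← Finset.sum_div]
        congr 1
        rw [show y = x + z by rw [hzdef]; ring]
        exact (add_pow x z n).symm
      rw [h2]; ring
    calc ∑ k ∈ Finset.range (n + 1),
        (Real.exp (-x) * x ^ k / (Nat.factorial k : ℝ) * c k) *
          (Real.exp (-z) * z ^ (n - k) / (Nat.factorial (n - k) : ℝ))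
        ≤ ∑ k ∈ Finset.range (n + 1),
          ((Real.exp (-x) * x ^ k / (Nat.factorial k : ℝ)) *
            (Real.exp (-z) * z ^ (n - k) / (Nat.factorial (n - k) : ℝ))) * c n := by
          refine Finset.sum_le_sum fun k hk => ?_
          have hkn : k ≤ n := Nat.lt_succ_iff.mp (Finset.mem_range.mp hk)
          have hw : 0 ≤ (Real.exp (-x) * x ^ k / (Nat.factorial k : ℝ)) *
              (Real.exp (-z) * z ^ (n - k) / (Nat.factorial (n - k) : ℝ)) := by positivity
          calc (Real.exp (-x) * x ^ k / (Nat.factorial k : ℝ) * c k) *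
              (Real.exp (-z) * z ^ (n - k) / (Nat.factorial (n - k) : ℝ))
              = ((Real.exp (-x) * x ^ k / (Nat.factorial k : ℝ)) *
                (Real.exp (-z) * z ^ (n - k) / (Nat.factorial (n - k) : ℝ))) * c k := by ring
            _ ≤ ((Real.exp (-x) * x ^ k / (Nat.factorial k : ℝ)) *
                (Real.exp (-z) * z ^ (n - k) / (Nat.factorial (n - k) : ℝ))) * c n :=
              mul_le_mul_of_nonneg_left (hcm hkn) hw
      _ = (∑ k ∈ Finset.range (n + 1),
          (Real.exp (-x) * x ^ k / (Nat.factorial k : ℝ)) *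
            (Real.exp (-z) * z ^ (n - k) / (Nat.factorial (n - k) : ℝ))) * c n := by
          rw [Finset.sum_mul]
      _ = Real.exp (-y) * y ^ n / (Nat.factorial n : ℝ) * c n := by rw [binom]
  calc ∑' i : ℕ, Real.exp (-x) * x ^ i / (Nat.factorial i : ℝ) * c i
      = (∑' i : ℕ, Real.exp (-x) * x ^ i / (Nat.factorial i : ℝ) * c i) *
        (∑' j : ℕ, Real.exp (-z) * z ^ j / (Nat.factorial j : ℝ)) := by rw [hg1, mul_one]
    _ = ∑' n : ℕ, ∑ k ∈ Finset.range (n + 1),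
        (Real.exp (-x) * x ^ k / (Nat.factorial k : ℝ) * c k) *
          (Real.exp (-z) * z ^ (n - k) / (Nat.factorial (n - k) : ℝ)) := hcauchy
    _ ≤ ∑' n : ℕ, Real.exp (-y) * y ^ n / (Nat.factorial n : ℝ) * c n :=
      Summable.tsum_le_tsum hstep hsum2 (g2aux_summable hc0 hcb hy)

lemma integrable_id_expMeasure {r : ℝ} (hr : 0 < r) :
    Integrable (id : ℝ → ℝ) (expMeasure r) := by
  have hmeas : Measurable (exponentialPDF r) :=
    (measurable_exponentialPDFReal r).ennreal_ofReal
  have h1 : expMeasure r = MeasureTheory.volume.withDensity (exponentialPDF r) := rfl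
  rw [h1, integrable_withDensity_iff_integrable_smul' hmeas
    (Filter.Eventually.of_forall fun x => ENNReal.ofReal_lt_top)]
  have heq : ∀ x : ℝ, (exponentialPDF r x).toReal • (id x : ℝ) = exponentialPDFReal r x * x := by
    intro x
    simp [exponentialPDF, ENNReal.toReal_ofReal (exponentialPDFReal_nonneg hr x), smul_eq_mul]
  simp only [heq]
  rw [← integrableOn_univ, ← Set.Iio_union_Ici (a := (0 : ℝ)), integrableOn_union]
  constructor
  · refine (integrableOn_congr_fun (g := fun _ => (0 : ℝ)) ?_ measurableSet_Iio).mpr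
      (integrableOn_zero)
    intro x hx
    have hx' : ¬ (0 : ℝ) ≤ x := not_le.mpr hx
    simp [exponentialPDFReal, gammaPDFReal, if_neg hx']
  · rw [integrableOn_Ici_iff_integrableOn_Ioi]
    have hg : IntegrableOn (fun x : ℝ => 2 * Real.exp (-(r / 2) * x)) (Set.Ioi (0 : ℝ)) :=
      (exp_neg_integrableOn_Ioi 0 (by positivity)).const_mul 2
    refine Integrable.mono' hg
      (((measurable_exponentialPDFReal r).mul measurable_id).aestronglyMeasurable) ?_
    refine (ae_restrict_iff' measurableSet_Ioi).mpr (Filter.Eventually.of_forall fun x hx => ?_)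
    have hx0 : (0 : ℝ) ≤ x := le_of_lt hx
    have hval : exponentialPDFReal r x = r * Real.exp (-(r * x)) := by
      simp [exponentialPDFReal, gammaPDFReal, if_pos hx0, Real.Gamma_one]
    rw [hval, Real.norm_of_nonneg (by positivity)]
    set E := Real.exp (-(r / 2) * x) with hE
    set F := Real.exp ((r / 2) * x) with hF
    have h1 : Real.exp (-(r * x)) = E * E := by
      rw [hE, ← Real.exp_add]; congr 1; ring
    have h2 : E * F = 1 := by
      rw [hE, hF, ← Real.exp_add, show -(r / 2) * x + r / 2 * x = 0 by ring, Real.exp_zero]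
    have h3 : r / 2 * x ≤ F := by
      have := Real.add_one_le_exp (r / 2 * x); rw [← hF] at this; linarith
    have hEpos : 0 < E := Real.exp_pos _
    have h4 : 2 * E * E * (r / 2 * x) ≤ 2 * E * E * F :=
      mul_le_mul_of_nonneg_left h3 (by positivity)
    have h5 : 2 * E * E * F = 2 * E := by
      rw [mul_assoc (2 * E) E F, h2, mul_one]
    have h6 : r * Real.exp (-(r * x)) * x = 2 * E * E * (r / 2 * x) := by rw [h1]; ring
    linarith


/-- The expected cost `g₂(p)` of arriving at opening time `−T₁` together with a Poisson(λp)
number of others is well-defined (the series converges), continuous and strictly increasing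
in `p` on `(0, 1]`. -/
theorem g2_well_defined_continuous_strict_mono
    {Ω : Type*} [MeasurableSpace Ω] (P : Measure Ω) [IsProbabilityMeasure P]
    (α β₁ β₂ lam μ T₁ : ℝ) (hα : 0 < α) (hβ₁ : 0 < β₁) (hβ₂ : 0 < β₂)
    (hlam : 0 < lam) (hμ : 0 < μ) (hT₁ : 0 < T₁)
    (X : ℕ → Ω → ℝ) (hmeas : ∀ i, Measurable (X i))
    (hindep : iIndepFun X P)
    (hdist : ∀ i, P.map (X i) = expMeasure μ)
    (g₂ : ℝ → ℝ)
    (hg₂ : ∀ p : ℝ, g₂ p = β₁ * T₁ + α * lam * p / (2 * μ) + β₂ *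
      ∑' i : ℕ, (Real.exp (-(lam * p)) * (lam * p) ^ i / (Nat.factorial i : ℝ)) *
        ((1 / (i : ℝ)) * ∑ k ∈ Finset.Icc 1 i,
          ∫ ω, max (∑ j ∈ Finset.range k, X j ω - T₁) 0 ∂P)) :
    (∀ p ∈ Set.Ioc (0 : ℝ) 1,
      Summable (fun i : ℕ =>
        (Real.exp (-(lam * p)) * (lam * p) ^ i / (Nat.factorial i : ℝ)) *
          ((1 / (i : ℝ)) * ∑ k ∈ Finset.Icc 1 i,
            ∫ ω, max (∑ j ∈ Finset.range k, X j ω - T₁) 0 ∂P))) ∧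
    ContinuousOn g₂ (Set.Ioc 0 1) ∧ StrictMonoOn g₂ (Set.Ioc 0 1) := by
  -- abbreviations
  set a : ℕ → ℝ := fun k => ∫ ω, max (∑ j ∈ Finset.range k, X j ω - T₁) 0 ∂P with ha_def
  set c : ℕ → ℝ := fun i => (1 / (i : ℝ)) * ∑ k ∈ Finset.Icc 1 i, a k with hc_def
  -- basic facts about X
  have hX0 : ∀ j, ∀ᵐ ω ∂P, 0 ≤ X j ω := by
    intro j
    have hmap : P.map (X j) (Set.Iio 0) = 0 := by
      rw [hdist j]
      show (MeasureTheory.volume.withDensity (exponentialPDF μ)) (Set.Iio 0) = 0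
      rw [withDensity_apply _ measurableSet_Iio]
      exact lintegral_exponentialPDF_of_nonpos le_rfl
    rw [Measure.map_apply (hmeas j) measurableSet_Iio] at hmap
    rw [ae_iff]
    simp only [not_le]; exact hmap
  have hXae : ∀ᵐ ω ∂P, ∀ j, 0 ≤ X j ω := ae_all_iff.mpr hX0
  have hXint : ∀ j, Integrable (X j) P := by
    intro j
    have h1 : Integrable (id : ℝ → ℝ) (P.map (X j)) := by
      rw [hdist j]; exact integrable_id_expMeasure hμ
    rwa [integrable_map_measure aestronglyMeasurable_id (hmeas j).aemeasurable] at h1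
  set M0 : ℝ := ∫ ω, X 0 ω ∂P with hM0_def
  have hXval : ∀ j, ∫ ω, X j ω ∂P = M0 := by
    have e : ∀ j, ∫ ω, X j ω ∂P = ∫ x, x ∂(expMeasure μ) := by
      intro j
      rw [← hdist j]
      exact (integral_map (hmeas j).aemeasurable aestronglyMeasurable_id).symm
    intro j; rw [e j, hM0_def, e 0]
  have hM0 : 0 ≤ M0 := integral_nonneg_of_ae (hX0 0)
  have hS_int : ∀ k, Integrable (fun ω => ∑ j ∈ Finset.range k, X j ω) P :=
    fun k => integrable_finset_sum _ fun j _ => hXint j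
  have hS_val : ∀ k : ℕ, ∫ ω, (∑ j ∈ Finset.range k, X j ω) ∂P = (k : ℝ) * M0 := by
    intro k
    rw [integral_finset_sum _ fun j _ => hXint j]
    rw [Finset.sum_congr rfl fun j _ => hXval j, Finset.sum_const, Finset.card_range,
      nsmul_eq_mul]
  have hS_nn : ∀ k, ∀ᵐ ω ∂P, 0 ≤ ∑ j ∈ Finset.range k, X j ω := by
    intro k
    filter_upwards [hXae] with ω hω
    exact Finset.sum_nonneg fun j _ => hω j
  have hf_meas : ∀ k : ℕ, Measurable fun ω => max (∑ j ∈ Finset.range k, X j ω - T₁) 0 :=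
    fun k => ((Finset.measurable_sum _ fun j _ => hmeas j).sub measurable_const).max
      measurable_const
  have hf_int : ∀ k : ℕ, Integrable (fun ω => max (∑ j ∈ Finset.range k, X j ω - T₁) 0) P := by
    intro k
    refine (hS_int k).mono' (hf_meas k).aestronglyMeasurable ?_
    filter_upwards [hS_nn k] with ω hω
    rw [Real.norm_of_nonneg (le_max_right _ _)]
    exact max_le (by linarith) hω
  -- facts about a
  have ha_nonneg : ∀ k, 0 ≤ a k := fun k => integral_nonneg fun ω => le_max_right _ _
  have ha_le : ∀ k : ℕ, a k ≤ (k : ℝ) * M0 := by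
    intro k
    rw [ha_def, ← hS_val k]
    refine integral_mono_ae (hf_int k) (hS_int k) ?_
    filter_upwards [hS_nn k] with ω hω
    exact max_le (by linarith) hω
  have ha_mono : Monotone a := by
    intro k l hkl
    refine integral_mono_ae (hf_int k) (hf_int l) ?_
    filter_upwards [hXae] with ω hω
    have hs : ∑ j ∈ Finset.range k, X j ω ≤ ∑ j ∈ Finset.range l, X j ω :=
      Finset.sum_le_sum_of_subset_of_nonneg (Finset.range_subset_range.mpr hkl) fun j _ _ => hω j
    exact max_le_max (by linarith) le_rfl
  -- facts about c
  have hcard : ∀ i : ℕ, (Finset.Icc 1 i).card = i := by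
    intro i; rw [Nat.card_Icc]; omega
  have hc0 : ∀ i, 0 ≤ c i := by
    intro i
    exact mul_nonneg (by positivity) (Finset.sum_nonneg fun k _ => ha_nonneg k)
  have hcb : ∀ i, c i ≤ M0 * 2 ^ i := by
    intro i
    rcases Nat.eq_zero_or_pos i with hi | hi
    · subst hi
      simp only [hc_def, Nat.cast_zero, div_zero, Finset.Icc_eq_empty (by norm_num : ¬(1:ℕ) ≤ 0),
        Finset.sum_empty, mul_zero, zero_mul, pow_zero, mul_one]
      simpa using hM0
    · have hi' : (0 : ℝ) < (i : ℝ) := by exact_mod_cast hi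
      have h1 : ∑ k ∈ Finset.Icc 1 i, a k ≤ (i : ℝ) * ((i : ℝ) * M0) := by
        calc ∑ k ∈ Finset.Icc 1 i, a k ≤ ∑ _k ∈ Finset.Icc 1 i, (i : ℝ) * M0 := by
              refine Finset.sum_le_sum fun k hk => ?_
              refine (ha_le k).trans ?_
              have hki : (k : ℝ) ≤ (i : ℝ) := by
                exact_mod_cast (Finset.mem_Icc.mp hk).2
              nlinarith
          _ = (i : ℝ) * ((i : ℝ) * M0) := by
              rw [Finset.sum_const, hcard i, nsmul_eq_mul]
      have h2 : (i : ℝ) ≤ 2 ^ i := by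
        exact_mod_cast (Nat.lt_two_pow_self (n := i)).le
      calc c i ≤ (1 / (i : ℝ)) * ((i : ℝ) * ((i : ℝ) * M0)) := by
            rw [hc_def]
            exact mul_le_mul_of_nonneg_left h1 (by positivity)
        _ = (i : ℝ) * M0 := by field_simp
        _ ≤ M0 * 2 ^ i := by nlinarith
  have hcm : Monotone c := by
    apply monotone_nat_of_le_succ
    intro i
    rcases Nat.eq_zero_or_pos i with hi | hi
    · subst hi
      have h0 : c 0 = 0 := by
        simp [hc_def, Finset.Icc_eq_empty (by norm_num : ¬(1:ℕ) ≤ 0)]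
      rw [h0]; exact hc0 1
    · have hi' : (0 : ℝ) < (i : ℝ) := by exact_mod_cast hi
      have htop : ∑ k ∈ Finset.Icc 1 (i + 1), a k
          = (∑ k ∈ Finset.Icc 1 i, a k) + a (i + 1) :=
        Finset.sum_Icc_succ_top (by omega) a
      have hub : ∑ k ∈ Finset.Icc 1 i, a k ≤ (i : ℝ) * a (i + 1) := by
        calc ∑ k ∈ Finset.Icc 1 i, a k ≤ ∑ _k ∈ Finset.Icc 1 i, a (i + 1) := by
              refine Finset.sum_le_sum fun k hk => ?_
              exact ha_mono (le_trans (Finset.mem_Icc.mp hk).2 (Nat.le_succ i))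
          _ = (i : ℝ) * a (i + 1) := by
              rw [Finset.sum_const, hcard i, nsmul_eq_mul]
      show (1 / (i : ℝ)) * ∑ k ∈ Finset.Icc 1 i, a k
          ≤ (1 / ((i + 1 : ℕ) : ℝ)) * ∑ k ∈ Finset.Icc 1 (i + 1), a k
      rw [htop, one_div_mul_eq_div, one_div_mul_eq_div]
      rw [div_le_div_iff₀ hi' (by positivity)]
      push_cast
      nlinarith [hub]
  -- the three statements
  refine ⟨?_, ?_, ?_⟩
  · intro p hp
    exact g2aux_summable hc0 hcb (mul_nonneg hlam.le hp.1.le)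
  · have hg₂eq : g₂ = fun p => β₁ * T₁ + α * lam * p / (2 * μ) + β₂ *
        ∑' i : ℕ, Real.exp (-(lam * p)) * (lam * p) ^ i / (Nat.factorial i : ℝ) * c i :=
      funext hg₂
    rw [hg₂eq]
    apply ContinuousOn.add
    · apply ContinuousOn.add continuousOn_const
      exact (Continuous.continuousOn (by fun_prop))
    · apply ContinuousOn.mul continuousOn_const
      refine continuousOn_tsum (f := fun (i : ℕ) (p : ℝ) =>
          Real.exp (-(lam * p)) * (lam * p) ^ i / (Nat.factorial i : ℝ) * c i)
        (fun i => Continuous.continuousOn (by fun_prop))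
        ((Real.summable_pow_div_factorial (2 * lam)).mul_left M0) ?_
      intro i p hp
      obtain ⟨hp0, hp1⟩ := hp
      have hnn : 0 ≤ Real.exp (-(lam * p)) * (lam * p) ^ i / (Nat.factorial i : ℝ) * c i :=
        mul_nonneg (by positivity) (hc0 i)
      rw [Real.norm_of_nonneg hnn]
      have hexp : Real.exp (-(lam * p)) ≤ 1 := by
        have := Real.exp_le_exp.mpr (neg_nonpos.mpr (by positivity : (0:ℝ) ≤ lam * p))
        simpa using this
      have hpow : (lam * p) ^ i ≤ lam ^ i := by
        apply pow_le_pow_left₀ (by positivity)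
        nlinarith
      calc Real.exp (-(lam * p)) * (lam * p) ^ i / (Nat.factorial i : ℝ) * c i
          ≤ 1 * lam ^ i / (Nat.factorial i : ℝ) * (M0 * 2 ^ i) := by
            gcongr
            exact hcb i
        _ = M0 * ((2 * lam) ^ i / (Nat.factorial i : ℝ)) := by rw [mul_pow]; ring
  · intro p hp q hq hpq
    rw [hg₂ p, hg₂ q]
    have hmix : ∑' i : ℕ, Real.exp (-(lam * p)) * (lam * p) ^ i / (Nat.factorial i : ℝ) * c i
        ≤ ∑' i : ℕ, Real.exp (-(lam * q)) * (lam * q) ^ i / (Nat.factorial i : ℝ) * c i :=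
      g2aux_mono hc0 hcm hcb (mul_nonneg hlam.le hp.1.le)
        (by nlinarith [hp.1, hq.1])
    have hlin : α * lam * p / (2 * μ) < α * lam * q / (2 * μ) := by
      rw [div_lt_div_iff₀ (by positivity) (by positivity)]
      have hpos : (0:ℝ) < α * lam * (2 * μ) := by positivity
      nlinarith [mul_pos hpos (sub_pos.mpr hpq)]
    have hterm := mul_le_mul_of_nonneg_left hmix hβ₂.le
    linarith
end

section
/- Let β₁, β₂, μ, Λ, T₁ > 0 with T₁ < β₂Λ/((β₁+β₂)μ). Then p₁ := [β₂Λ² − T₁β₁Λμ + (1/2)√(−4T₁²β₂(α+β₂)Λ²μ² + (2β₂Λ² − 2T₁β₁Λμ)²)] / ((α+β₂)Λ²) is strictly decreasing as a function of T₁ on the interval where the discriminant is nonnegative, for any fixed α > 0. -/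
/-- The atom size `p₁` at the opening time `−T₁` in the mixed equilibrium of the constrained
fluid model is strictly decreasing as a function of `T₁` on the set of effective opening times
where the discriminant is nonnegative. -/
theorem atom_size_strictly_decreasing
    (α β₁ β₂ μ Λ : ℝ) (hα : 0 < α) (hβ₁ : 0 < β₁) (hβ₂ : 0 < β₂) (hμ : 0 < μ) (hΛ : 0 < Λ) :
    StrictAntiOn
      (fun T₁ : ℝ =>
        (β₂ * Λ ^ 2 - T₁ * β₁ * Λ * μ
          + (1 / 2) * Real.sqrt (-(4 * T₁ ^ 2 * β₂ * (α + β₂) * Λ ^ 2 * μ ^ 2)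
              + (2 * β₂ * Λ ^ 2 - 2 * T₁ * β₁ * Λ * μ) ^ 2))
          / ((α + β₂) * Λ ^ 2))
      {T₁ : ℝ | 0 < T₁ ∧ T₁ < β₂ * Λ / ((β₁ + β₂) * μ) ∧
        0 ≤ -(4 * T₁ ^ 2 * β₂ * (α + β₂) * Λ ^ 2 * μ ^ 2)
          + (2 * β₂ * Λ ^ 2 - 2 * T₁ * β₁ * Λ * μ) ^ 2} := by
  intro a ha b hb hab
  obtain ⟨ha1, ha2, ha3⟩ := ha
  obtain ⟨hb1, hb2, hb3⟩ := hb
  have hC : 0 < (α + β₂) * Λ ^ 2 := by positivity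
  have hbm : b * ((β₁ + β₂) * μ) < β₂ * Λ := by
    have := (lt_div_iff₀ (by positivity)).mp hb2
    linarith
  have ham : a * ((β₁ + β₂) * μ) < β₂ * Λ := by
    have := (lt_div_iff₀ (by positivity)).mp ha2
    linarith
  have hAb : 0 < β₂ * Λ ^ 2 - b * β₁ * Λ * μ := by
    nlinarith [mul_lt_mul_of_pos_right hbm hΛ, mul_pos (mul_pos (mul_pos hb1 hβ₂) hμ) hΛ]
  have hAa : β₂ * Λ ^ 2 - b * β₁ * Λ * μ < β₂ * Λ ^ 2 - a * β₁ * Λ * μ := by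
    nlinarith [mul_pos (mul_pos (mul_pos (sub_pos.mpr hab) hβ₁) hΛ) hμ]
  have hk : (0:ℝ) < 4 * β₂ * (α + β₂) * Λ ^ 2 * μ ^ 2 := by positivity
  have hT2 : a ^ 2 < b ^ 2 := by nlinarith
  have hA2 : (β₂ * Λ ^ 2 - b * β₁ * Λ * μ) ^ 2 < (β₂ * Λ ^ 2 - a * β₁ * Λ * μ) ^ 2 :=
    pow_lt_pow_left₀ hAa hAb.le (by norm_num)
  have hD : -(4 * b ^ 2 * β₂ * (α + β₂) * Λ ^ 2 * μ ^ 2)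
      + (2 * β₂ * Λ ^ 2 - 2 * b * β₁ * Λ * μ) ^ 2
      ≤ -(4 * a ^ 2 * β₂ * (α + β₂) * Λ ^ 2 * μ ^ 2)
      + (2 * β₂ * Λ ^ 2 - 2 * a * β₁ * Λ * μ) ^ 2 := by
    nlinarith [mul_lt_mul_of_pos_left hT2 hk]
  have hsq := Real.sqrt_le_sqrt hD
  simp only
  have hnum : β₂ * Λ ^ 2 - b * β₁ * Λ * μ
      + (1 / 2) * Real.sqrt (-(4 * b ^ 2 * β₂ * (α + β₂) * Λ ^ 2 * μ ^ 2)
          + (2 * β₂ * Λ ^ 2 - 2 * b * β₁ * Λ * μ) ^ 2)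
      < β₂ * Λ ^ 2 - a * β₁ * Λ * μ
      + (1 / 2) * Real.sqrt (-(4 * a ^ 2 * β₂ * (α + β₂) * Λ ^ 2 * μ ^ 2)
          + (2 * β₂ * Λ ^ 2 - 2 * a * β₁ * Λ * μ) ^ 2) := by linarith
  gcongr
end

section
/- Let α, β₁, β₂, μ, Λ > 0 and T₁ = A₁ := (−β₁ + √(β₁² − αβ₂ + β₂²))Λ/(β₂μ), assuming β₁² − αβ₂ + β₂² ≥ 0. Then the cost of arriving with everyone else at −T₁, namely β₁T₁ + αΛ/(2μ) + β₂μ(Λ/μ − T₁)²/(2Λ), equals the cost of the best deviation β₂(Λ/μ − T₁). Moreover, for T₁ < A₁ the former is strictly smaller (so the pure equilibrium at −T₁ holds). -/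
/-- At `T₁ = A₁`, the cost of arriving with everyone else at `−T₁` equals the cost
`β₂(Λ/μ − T₁)` of the best deviation, and for `0 < T₁ < A₁` the former is strictly smaller
(so the pure equilibrium at `−T₁` holds). -/
theorem pure_equilibrium_threshold
    (α β₁ β₂ μ Λ : ℝ) (hα : 0 < α) (hβ₁ : 0 < β₁) (hβ₂ : 0 < β₂) (hμ : 0 < μ) (hΛ : 0 < Λ)
    (hdisc : 0 ≤ β₁ ^ 2 - α * β₂ + β₂ ^ 2) :
    let A₁ : ℝ := (-β₁ + Real.sqrt (β₁ ^ 2 - α * β₂ + β₂ ^ 2)) * Λ / (β₂ * μ)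
    β₁ * A₁ + α * Λ / (2 * μ) + β₂ * μ * (Λ / μ - A₁) ^ 2 / (2 * Λ) = β₂ * (Λ / μ - A₁) ∧
    ∀ T₁ : ℝ, 0 < T₁ → T₁ < A₁ →
      β₁ * T₁ + α * Λ / (2 * μ) + β₂ * μ * (Λ / μ - T₁) ^ 2 / (2 * Λ)
        < β₂ * (Λ / μ - T₁) := by
  intro A₁
  set s : ℝ := Real.sqrt (β₁ ^ 2 - α * β₂ + β₂ ^ 2) with hs_def
  have hs : s ^ 2 = β₁ ^ 2 - α * β₂ + β₂ ^ 2 := Real.sq_sqrt hdisc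
  have hs0 : 0 ≤ s := Real.sqrt_nonneg _
  have hA : A₁ = (-β₁ + s) * Λ / (β₂ * μ) := rfl
  have hβμ : (0:ℝ) < β₂ * μ := mul_pos hβ₂ hμ
  have h2Λμ : (0:ℝ) < 2 * Λ * μ := by positivity
  -- identity: cost difference as a quadratic over a positive denominator
  have hident : ∀ T : ℝ,
      β₁ * T + α * Λ / (2 * μ) + β₂ * μ * (Λ / μ - T) ^ 2 / (2 * Λ) - β₂ * (Λ / μ - T)
        = (β₂ * μ ^ 2 * T ^ 2 + 2 * β₁ * Λ * μ * T + (α - β₂) * Λ ^ 2) / (2 * Λ * μ) := by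
    intro T
    field_simp
    ring
  have key0 : β₂ * μ ^ 2 * A₁ ^ 2 + 2 * β₁ * Λ * μ * A₁ + (α - β₂) * Λ ^ 2 = 0 := by
    rw [hA]
    field_simp
    linear_combination (Λ ^ 2) * hs
  constructor
  · have h := hident A₁
    rw [key0] at h
    simp at h
    linarith
  · intro T hT hTA
    rw [hA] at hTA
    have h1 : T * (β₂ * μ) < (-β₁ + s) * Λ := (lt_div_iff₀ hβμ).mp hTA
    have h2 : (0:ℝ) < T * (β₂ * μ) + (β₁ + s) * Λ := by positivity
    have key : (T * (β₂ * μ) - (-β₁ + s) * Λ) * (T * (β₂ * μ) + (β₁ + s) * Λ) < 0 :=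
      mul_neg_of_neg_of_pos (by linarith) h2
    have goal' : β₂ * μ ^ 2 * T ^ 2 + 2 * β₁ * Λ * μ * T + (α - β₂) * Λ ^ 2 < 0 := by
      nlinarith [key, hs]
    have hdiv : (β₂ * μ ^ 2 * T ^ 2 + 2 * β₁ * Λ * μ * T + (α - β₂) * Λ ^ 2) / (2 * Λ * μ) < 0 :=
      div_neg_of_neg_of_pos goal' h2Λμ
    have h := hident T
    linarith
end

section
/- Let α, β₁, β₂, μ, Λ, T₁, T₂ > 0 with T₁ + T₂ < Λ/μ. The equilibrium social cost in the mixed cases, Λ(T₂β₂ + (α+β₂)(Λ/μ − T₁ − T₂)), is strictly greater than the socially optimal cost (1/2)(T₁²β₁μ + T₂²β₂μ + 2β₂T₂(Λ − (T₁+T₂)μ) + (α+β₂)(Λ − (T₁+T₂)μ)²/μ) whenever T₁ > 0. -/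
/-- When both the opening time `−T₁` and closing time `T₂` are effective
(`T₁ + T₂ < Λ/μ`), and the socially optimal strategy is the uniform-plus-atom one
(`T₁ ≤ (αΛ + β₂Λ − T₂αμ)/((α+β₁+β₂)μ)`), the equilibrium social cost in the mixed cases
strictly exceeds the socially optimal cost whenever `T₁ > 0`. -/
theorem equilibrium_cost_exceeds_optimal_both_constraints
    (α β₁ β₂ μ Λ T₁ T₂ : ℝ) (hα : 0 < α) (hβ₁ : 0 < β₁) (hβ₂ : 0 < β₂) (hμ : 0 < μ)
    (hΛ : 0 < Λ) (hT₁ : 0 < T₁) (hT₂ : 0 < T₂) (hwindow : T₁ + T₂ < Λ / μ)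
    (hcase : T₁ ≤ (α * Λ + β₂ * Λ - T₂ * α * μ) / ((α + β₁ + β₂) * μ)) :
    Λ * (T₂ * β₂ + (α + β₂) * (Λ / μ - T₁ - T₂))
      > (1 / 2) * (T₁ ^ 2 * β₁ * μ + T₂ ^ 2 * β₂ * μ
          + 2 * β₂ * T₂ * (Λ - (T₁ + T₂) * μ)
          + (α + β₂) * (Λ - (T₁ + T₂) * μ) ^ 2 / μ) := by
  have hm : 0 < Λ - (T₁ + T₂) * μ := by
    have := (lt_div_iff₀ hμ).mp hwindow
    linarith
  have hd : 0 < (α + β₁ + β₂) * μ := by positivity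
  have hcase' : T₁ * ((α + β₁ + β₂) * μ) ≤ α * Λ + β₂ * Λ - T₂ * α * μ :=
    (le_div_iff₀ hd).mp hcase
  have hμ' : μ ≠ 0 := hμ.ne'
  rw [gt_iff_lt, ← sub_pos]
  set m := Λ - (T₁ + T₂) * μ with hmdef
  have hdiff : Λ * (T₂ * β₂ + (α + β₂) * (Λ / μ - T₁ - T₂))
      - (1 / 2) * (T₁ ^ 2 * β₁ * μ + T₂ ^ 2 * β₂ * μ
          + 2 * β₂ * T₂ * m + (α + β₂) * m ^ 2 / μ)
      = (2 * T₁ * T₂ * β₂ * μ ^ 2 + T₂ ^ 2 * β₂ * μ ^ 2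
          + (α + β₂) * m * (2 * (T₁ + T₂) * μ + m) - T₁ ^ 2 * β₁ * μ ^ 2) / (2 * μ) := by
    field_simp [hmdef]
    ring
  rw [hdiff]
  apply div_pos _ (by positivity)
  have hkey : β₁ * T₁ * μ ≤ (α + β₂) * m + β₂ * T₂ * μ := by
    simp only [hmdef]; nlinarith [hcase']
  nlinarith [mul_le_mul_of_nonneg_right hkey (le_of_lt (mul_pos hT₁ hμ)),
    mul_pos (mul_pos hm hT₁) (mul_pos hμ hα),
    mul_pos (mul_pos hm hT₁) (mul_pos hμ hβ₂),
    mul_pos (mul_pos hm hT₂) (mul_pos hμ hα),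
    mul_pos (mul_pos hm hT₂) (mul_pos hμ hβ₂),
    mul_pos (mul_pos hm hm) hα, mul_pos (mul_pos hm hm) hβ₂,
    mul_pos (mul_pos hT₁ hT₂) (mul_pos hμ hμ),
    mul_pos (mul_pos hT₂ hT₂) (mul_pos hμ hμ), hβ₂.le]
end
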